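/- Let M be a one-way deterministic one-counter automaton with state set Q and counter bound m, fix a symbol σ, and consider the nonzero-mode dynamics for σ. Starting from state q with counter offset 0, let (q_k, d_k) be the nonzero-mode sequence, let n₁ < n₂ be minimal such that q₀, q₁, …, q_{n₂−1} are pairwise distinct and q_{n₁} = q_{n₂}, and set r = d_{n₂} − d_{n₁} (the difference of the cycle entered from q). Then for all integers v and v' such that v − v' is an integer multiple of r, the configurations (q,v) and (q,v') are σ-synchronized under the nonzero-mode dynamics: there exist nonnegative integers a and b such that the nonzero-mode configuration reached from (q,v) after a steps equals the nonzero-mode configuration reached from (q,v') after b steps. -/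
import Mathlib


/-- Input symbols extended with the left (`cent`) and right (`dollar`) end-markers. -/
inductive TSym (α : Type) : Type
  | cent : TSym α
  | letter : α → TSym α
  | dollar : TSym α

/-- The tape content `¢ w $` for an input word `w`. -/
def tagged {α : Type} (w : List α) : List (TSym α) :=
  TSym.cent :: (w.map TSym.letter ++ [TSym.dollar])

/-- A one-way deterministic one-counter automaton. -/
structure OneD1CA (α : Type) where
  Q : Type
  [fintypeQ : Fintype Q]
  [decQ : DecidableEq Q]
  q0 : Q
  acc : Set Q
  m : ℕ
  δ : Q → TSym α → Bool → Q × ℤ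
  bound : ∀ q σ z, |(δ q σ z).2| ≤ (m : ℤ)

attribute [instance] OneD1CA.fintypeQ OneD1CA.decQ

namespace OneD1CA

variable {α : Type} (M : OneD1CA α)

/-- One computation step on a configuration (state, counter value). -/
def step (p : M.Q × ℤ) (σ : TSym α) : M.Q × ℤ :=
  ((M.δ p.1 σ (decide (p.2 = 0))).1, p.2 + (M.δ p.1 σ (decide (p.2 = 0))).2)

/-- Configuration reached from the initial configuration after reading a list of tape symbols. -/
def confAfter (l : List (TSym α)) : M.Q × ℤ :=
  l.foldl M.step (M.q0, 0)

/-- The automaton accepts `w` iff the state after reading `¢ w $` is accepting. -/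
def accepts (w : List α) : Prop :=
  (M.confAfter (tagged w)).1 ∈ M.acc

/-- The automaton recognizes the language `L` if it accepts exactly the members of `L`. -/
def recognizes (L : Set (List α)) : Prop :=
  ∀ w : List α, M.accepts w ↔ w ∈ L

end OneD1CA

/-- The nonzero-mode step on configurations for the input symbol `σ`. -/
def nzStep {α : Type} (M : OneD1CA α) (σ : α) (p : M.Q × ℤ) : M.Q × ℤ :=
  ((M.δ p.1 (TSym.letter σ) false).1, p.2 + (M.δ p.1 (TSym.letter σ) false).2)


/-- Translation invariance of the nonzero-mode dynamics in the counter. -/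
lemma nz_shift {α : Type} (M : OneD1CA α) (σ : α) (k : ℕ) :
    ∀ (p : M.Q × ℤ) (v : ℤ),
      (nzStep M σ)^[k] (p.1, p.2 + v) =
        (((nzStep M σ)^[k] p).1, ((nzStep M σ)^[k] p).2 + v) := by
  induction k with
  | zero => intro p v; simp
  | succ k ih =>
    intro p v
    rw [Function.iterate_succ_apply, Function.iterate_succ_apply]
    have : nzStep M σ (p.1, p.2 + v) = ((nzStep M σ p).1, (nzStep M σ p).2 + v) := by
      simp [nzStep]; ring
    rw [this]
    exact ih (nzStep M σ p) v

/-- if `v - v'` is a multiple of the difference `r` of the cycle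
entered from `q`, then `(q, v)` and `(q, v')` are `σ`-synchronized under the
nonzero-mode dynamics. -/
theorem stmt8 {α : Type} (M : OneD1CA α) (σ : α) (q : M.Q)
    (n1 n2 : ℕ) (h12 : n1 < n2)
    (hdistinct : ∀ i j : ℕ, i < n2 → j < n2 →
      ((nzStep M σ)^[i] (q, 0)).1 = ((nzStep M σ)^[j] (q, 0)).1 → i = j)
    (hcycle : ((nzStep M σ)^[n1] (q, 0)).1 = ((nzStep M σ)^[n2] (q, 0)).1)
    (r : ℤ)
    (hr : r = ((nzStep M σ)^[n2] (q, 0)).2 - ((nzStep M σ)^[n1] (q, 0)).2) :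
    ∀ v v' : ℤ, r ∣ (v - v') →
      ∃ a b : ℕ, (nzStep M σ)^[a] (q, v) = (nzStep M σ)^[b] (q, v') := by
  set S : ℕ → M.Q := fun k => ((nzStep M σ)^[k] (q, 0)).1 with hS
  set D : ℕ → ℤ := fun k => ((nzStep M σ)^[k] (q, 0)).2 with hD
  set p : ℕ := n2 - n1 with hp
  -- key cycle lemma
  have hcyc : ∀ t : ℕ, (nzStep M σ)^[n1 + t * p] (q, 0) = (S n1, D n1 + t * r) := by
    intro t
    induction t with
    | zero => simp [hS, hD]
    | succ t ih =>
      have hadd : n1 + (t + 1) * p = p + (n1 + t * p) := by ring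
      rw [hadd, Function.iterate_add_apply, ih]
      have h1 : (S n1, D n1 + t * r) = ((S n1, D n1).1, (S n1, D n1).2 + t * r) := rfl
      rw [h1, nz_shift M σ p (S n1, D n1) (t * r)]
      have h2 : (S n1, D n1) = (nzStep M σ)^[n1] (q, 0) := rfl
      rw [h2, ← Function.iterate_add_apply]
      have h3 : p + n1 = n2 := by omega
      rw [h3]
      have h4 : (nzStep M σ)^[n2] (q, 0) = (S n1, D n2) := by
        refine Prod.ext ?_ rfl
        exact hcycle.symm
      rw [h4]
      simp [hr, hD]
      push_cast
      ring
  intro v v' hdvd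
  obtain ⟨c, hc⟩ := hdvd
  -- choose t, s naturals with (s : ℤ) - t = c
  obtain ⟨t, s, hts⟩ : ∃ t s : ℕ, (s : ℤ) - (t : ℤ) = c := by
    rcases le_or_gt 0 c with h | h
    · exact ⟨0, c.toNat, by simp [Int.toNat_of_nonneg h]⟩
    · exact ⟨(-c).toNat, 0, by simp [Int.toNat_of_nonneg (by omega : (0:ℤ) ≤ -c)]⟩
  refine ⟨n1 + t * p, n1 + s * p, ?_⟩
  have hv : (q, v) = ((q, (0:ℤ)).1, (q, (0:ℤ)).2 + v) := by simp
  have hv' : (q, v') = ((q, (0:ℤ)).1, (q, (0:ℤ)).2 + v') := by simp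
  rw [hv, nz_shift, hv', nz_shift, hcyc t, hcyc s]
  refine Prod.ext rfl ?_
  simp only
  have : v - v' = ((s : ℤ) - t) * r := by rw [hts]; linarith [hc]
  linarith [this]
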